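/- Let G be a finite simple graph with maximum degree Δ, and let W be an irregularising walk of G such that inc_W(u) ≤ k for every vertex u. Then G admits a proper labelling ℓ with σ_ℓ(u) ≤ k + Δ for every vertex u. (Consequently, for nice G the minimum over proper labellings of the maximum vertex sum is at most MV^W(G) + Δ.) -/

import Mathlib

open SimpleGraph Finset

variable {V : Type*}

/-- `W.inc u` is the number of edge-traversals of the walk `W` incident to `u`. -/
def SimpleGraph.Walk.inc [DecidableEq V] {G : SimpleGraph V} {a b : V}
    (W : G.Walk a b) (u : V) : ℕ :=
  (W.edges.filter (fun e => u ∈ e)).length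

/-- A walk `W` of `G` is irregularising if in the multigraph `G + W` no two
adjacent vertices have the same degree. -/
def SimpleGraph.Walk.Irregularising [Fintype V] [DecidableEq V] {G : SimpleGraph V}
    [DecidableRel G.Adj] {a b : V} (W : G.Walk a b) : Prop :=
  ∀ ⦃u v : V⦄, G.Adj u v → G.degree u + W.inc u ≠ G.degree v + W.inc v

/-- The vertex sum `σ_ℓ(u)` of a labelling. -/
def vertexSum [Fintype V] [DecidableEq V] (G : SimpleGraph V) [DecidableRel G.Adj]
    (ℓ : Sym2 V → ℕ) (u : V) : ℕ :=
  ∑ w ∈ G.neighborFinset u, ℓ s(u, w)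

/-- A labelling is proper if adjacent vertices get distinct sums. -/
def IsProperLabelling [Fintype V] [DecidableEq V] (G : SimpleGraph V) [DecidableRel G.Adj]
    (ℓ : Sym2 V → ℕ) : Prop :=
  ∀ ⦃u v : V⦄, G.Adj u v → vertexSum G ℓ u ≠ vertexSum G ℓ v

/-- Minimum length of an irregularising walk, as an extended natural number. -/
noncomputable def MLW [Fintype V] [DecidableEq V] (G : SimpleGraph V) [DecidableRel G.Adj] : ℕ∞ :=
  ⨅ (a : V) (b : V) (W : G.Walk a b) (_ : W.Irregularising), (W.length : ℕ∞)

/-- Infimum over irregularising walks of the maximum number of traversals of a single edge. -/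
noncomputable def MEW [Fintype V] [DecidableEq V] (G : SimpleGraph V) [DecidableRel G.Adj] : ℕ∞ :=
  ⨅ (a : V) (b : V) (W : G.Walk a b) (_ : W.Irregularising),
    ((W.edges.toFinset.sup fun e => W.edges.count e : ℕ) : ℕ∞)

/-- Infimum over irregularising walks of `max_u inc_W(u)`. -/
noncomputable def MVW [Fintype V] [DecidableEq V] (G : SimpleGraph V) [DecidableRel G.Adj] : ℕ∞ :=
  ⨅ (a : V) (b : V) (W : G.Walk a b) (_ : W.Irregularising),
    ((Finset.univ.sup fun u => W.inc u : ℕ) : ℕ∞)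

/-- If `W` is an irregularising walk of `G` with `inc_W(u) ≤ k` for every
vertex `u`, then `G` admits a proper labelling `ℓ` with `σ_ℓ(u) ≤ k + Δ` for every
vertex `u`, where `Δ` is the maximum degree of `G`. -/

lemma filter_len_eq_sum_count {V : Type*} [Fintype V] [DecidableEq V] (G : SimpleGraph V)
    [DecidableRel G.Adj] (u : V) (l : List (Sym2 V)) (hl : ∀ e ∈ l, e ∈ G.edgeSet) :
    (l.filter (fun e => u ∈ e)).length = ∑ w ∈ G.neighborFinset u, l.count s(u, w) := by
  induction l with
  | nil => simp
  | cons e l ih =>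
    have hl' : ∀ e ∈ l, e ∈ G.edgeSet := fun e he => hl e (List.mem_cons_of_mem _ he)
    by_cases hu : u ∈ e
    · obtain ⟨w₀, rfl⟩ : ∃ w₀, e = s(u, w₀) := ⟨Sym2.Mem.other hu, (Sym2.other_spec hu).symm⟩
      have hadj : G.Adj u w₀ := hl _ List.mem_cons_self
      rw [List.filter_cons_of_pos (by simp)]
      simp only [List.count_cons, Finset.sum_add_distrib, ← ih hl', List.length_cons]
      have h1 : ∑ w ∈ G.neighborFinset u, (if s(u, w₀) = s(u, w) then 1 else 0) = 1 := by
        simp only [Sym2.congr_right]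
        rw [Finset.sum_ite_eq (G.neighborFinset u) w₀ (fun _ => 1)]
        simp [hadj]
      simp only [beq_iff_eq]
      omega
    · rw [List.filter_cons_of_neg (by simpa using hu)]
      rw [ih hl']
      apply Finset.sum_congr rfl
      intro w hw
      rw [List.count_cons]
      have h2 : ¬ (e = s(u, w)) := fun h => hu (h.symm ▸ Sym2.mem_mk_left u w)
      simp [h2]

theorem stmt_2 {V : Type*} [Fintype V] [DecidableEq V] (G : SimpleGraph V)
    [DecidableRel G.Adj] {a b : V} (W : G.Walk a b) (hW : W.Irregularising)
    (k : ℕ) (hk : ∀ u : V, W.inc u ≤ k) :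
    ∃ ℓ : Sym2 V → ℕ, (∀ e ∈ G.edgeSet, 1 ≤ ℓ e) ∧ IsProperLabelling G ℓ ∧
      ∀ u : V, vertexSum G ℓ u ≤ k + G.maxDegree := by
  have key : ∀ u : V, vertexSum G (fun e => 1 + W.edges.count e) u
      = G.degree u + W.inc u := by
    intro u
    rw [vertexSum, SimpleGraph.Walk.inc,
      filter_len_eq_sum_count G u W.edges (fun e he => W.edges_subset_edgeSet he)]
    rw [Finset.sum_add_distrib]
    rw [Finset.sum_const, smul_eq_mul, mul_one, SimpleGraph.degree]
  refine ⟨fun e => 1 + W.edges.count e, fun e _ => Nat.le_add_right 1 _, ?_, ?_⟩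
  · intro u v huv h
    exact hW huv (by rwa [key u, key v] at h)
  · intro u
    rw [key u]
    have := G.degree_le_maxDegree u
    have := hk u
    omega
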